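/- Assume the support of μ is an infinite set, so the orthonormal polynomials T_k exist. Let (Q0, Q1, Q2) be a type I Hermite–Padé triple of order n for (f1, f2). Then c_k(Q1 + Q2 σ̂) = ∫_Δ (Q1 + Q2 σ̂) T_k dμ = 0 for all k = 0,…,2n; in particular, if Q2 is not identically zero then (−Q1, Q2) is a linear Tschebyshev–Padé pair of order n for the Markov function σ̂. -/

import Mathlib

open MeasureTheory Polynomial

/-- The (topological) support of a Borel measure on `ℝ`. -/
def measSupport (μ : Measure ℝ) : Set ℝ := {x | ∀ U ∈ nhds x, μ U ≠ 0}

open Finset Filter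

lemma hp_ae_mem {ν : Measure ℝ} {s : Set ℝ} (hs : ν sᶜ = 0) : ∀ᵐ x ∂ν, x ∈ s := by
  rw [ae_iff]
  exact hs

lemma hp_integrable_of_bdd {ν : Measure ℝ} [IsFiniteMeasure ν] {s : Set ℝ} (hs : ν sᶜ = 0)
    {g : ℝ → ℂ} (hg : AEStronglyMeasurable g ν) (M : ℝ) (hM : ∀ x ∈ s, ‖g x‖ ≤ M) :
    Integrable g ν := by
  refine Integrable.mono' (integrable_const M) hg ?_
  filter_upwards [hp_ae_mem hs] with x hx using hM x hx

lemma hp_norm_integral_bdd {ν : Measure ℝ} [IsFiniteMeasure ν] {s : Set ℝ} (hs : ν sᶜ = 0)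
    {g : ℝ → ℂ} (M : ℝ) (hM : ∀ x ∈ s, ‖g x‖ ≤ M) :
    ‖∫ x, g x ∂ν‖ ≤ M * (ν Set.univ).toReal := by
  refine norm_integral_le_of_norm_le_const ?_
  filter_upwards [hp_ae_mem hs] with x hx using hM x hx

lemma hp_poly_eval_bound (P : Polynomial ℂ) {x : ℝ} (hx : x ∈ Set.Icc (-1:ℝ) 1) :
    ‖P.eval (x:ℂ)‖ ≤ ∑ i ∈ range (P.natDegree + 1), ‖P.coeff i‖ := by
  have hx1 : ‖(x:ℂ)‖ ≤ 1 := by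
    rw [Complex.norm_real, Real.norm_eq_abs, abs_le]
    exact ⟨hx.1, hx.2⟩
  rw [Polynomial.eval_eq_sum_range]
  refine (norm_sum_le _ _).trans (Finset.sum_le_sum fun i _ => ?_)
  rw [norm_mul, norm_pow]
  calc ‖P.coeff i‖ * ‖(x:ℂ)‖ ^ i ≤ ‖P.coeff i‖ * 1 :=
        mul_le_mul_of_nonneg_left (pow_le_one₀ (norm_nonneg _) hx1) (norm_nonneg _)
    _ = ‖P.coeff i‖ := mul_one _

lemma hp_sh_meas (σ : Measure ℝ) [IsFiniteMeasure σ] :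
    StronglyMeasurable fun x : ℝ => ∫ t : ℝ, ((x:ℂ) - (t:ℂ))⁻¹ ∂σ := by
  apply StronglyMeasurable.integral_prod_right' (f := fun p : ℝ × ℝ => ((p.1:ℂ) - (p.2:ℂ))⁻¹)
  exact (((Complex.measurable_ofReal.comp measurable_fst).sub
    (Complex.measurable_ofReal.comp measurable_snd)).inv).stronglyMeasurable

/-- A polynomial bounded near infinity has degree ≤ 0. -/
lemma hp_poly_bdd_degree_le_zero (p : Polynomial ℂ) (C R : ℝ)
    (h : ∀ z : ℂ, R < ‖z‖ → ‖p.eval z‖ ≤ C) : p.degree ≤ 0 := by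
  by_contra hdeg
  push_neg at hdeg
  have ht : Tendsto (fun r : ℝ => ‖p.eval (r:ℂ)‖) atTop atTop :=
    p.tendsto_norm_atTop hdeg (by
      simpa [Complex.norm_real] using tendsto_abs_atTop_atTop)
  obtain ⟨r, hr⟩ := (ht.eventually_gt_atTop C).and (eventually_gt_atTop (max R 0)) |>.exists
  have hrR : R < ‖(r:ℂ)‖ := by
    rw [Complex.norm_real, Real.norm_eq_abs]
    exact lt_of_le_of_lt (le_max_left _ _) (lt_of_lt_of_le hr.2 (le_abs_self r))
  exact absurd (h _ hrR) (not_le.mpr hr.1)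

/-- Division split for a polynomial. -/
lemma hp_poly_div_split (P : Polynomial ℂ) (z w : ℂ) (hzw : z ≠ w) :
    P.eval z * (z - w)⁻¹ =
      (∑ i ∈ range (P.natDegree + 1), ∑ j ∈ range i, P.coeff i * w ^ (i - 1 - j) * z ^ j)
        + P.eval w * (z - w)⁻¹ := by
  have hne : z - w ≠ 0 := sub_ne_zero.mpr hzw
  have key : P.eval z - P.eval w =
      (∑ i ∈ range (P.natDegree + 1), ∑ j ∈ range i, P.coeff i * w ^ (i - 1 - j) * z ^ j)
        * (z - w) := by
    rw [Polynomial.eval_eq_sum_range (p := P) z, Polynomial.eval_eq_sum_range (p := P) w,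
      ← Finset.sum_sub_distrib, Finset.sum_mul]
    refine Finset.sum_congr rfl fun i _ => ?_
    have hg := geom_sum₂_mul z w i
    calc P.coeff i * z ^ i - P.coeff i * w ^ i = P.coeff i * (z ^ i - w ^ i) := by ring
      _ = P.coeff i * ((∑ j ∈ range i, z ^ j * w ^ (i - 1 - j)) * (z - w)) := by rw [hg]
      _ = (∑ j ∈ range i, P.coeff i * w ^ (i - 1 - j) * z ^ j) * (z - w) := by
          rw [← mul_assoc, Finset.mul_sum, Finset.sum_mul, Finset.sum_mul]
          exact Finset.sum_congr rfl fun j _ => by ring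
  have : P.eval z * (z - w)⁻¹ - P.eval w * (z - w)⁻¹ =
      ∑ i ∈ range (P.natDegree + 1), ∑ j ∈ range i, P.coeff i * w ^ (i - 1 - j) * z ^ j := by
    rw [← sub_mul, key, mul_assoc, mul_inv_cancel₀ hne, mul_one]
  linear_combination this

/-- Geometric split for a power. -/
lemma hp_pow_div_split (z w : ℂ) (hzw : z ≠ w) (N : ℕ) :
    z ^ N * (z - w)⁻¹ =
      (∑ j ∈ range N, w ^ j * z ^ (N - 1 - j)) + w ^ N * (z - w)⁻¹ := by
  have hne : z - w ≠ 0 := sub_ne_zero.mpr hzw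
  have hs : (∑ j ∈ range N, w ^ j * z ^ (N - 1 - j)) = ∑ i ∈ range N, z ^ i * w ^ (N - 1 - i) := by
    rw [← Finset.sum_range_reflect (fun j => w ^ j * z ^ (N - 1 - j)) N]
    refine Finset.sum_congr rfl fun i hi => ?_
    have hi' : i < N := Finset.mem_range.mp hi
    have : N - 1 - (N - 1 - i) = i := by omega
    rw [this, mul_comm]
  have key : z ^ N - w ^ N = (∑ j ∈ range N, w ^ j * z ^ (N - 1 - j)) * (z - w) := by
    rw [hs, geom_sum₂_mul]
  have : z ^ N * (z - w)⁻¹ - w ^ N * (z - w)⁻¹ =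
      ∑ j ∈ range N, w ^ j * z ^ (N - 1 - j) := by
    rw [← sub_mul, key, mul_assoc, mul_inv_cancel₀ hne, mul_one]
  linear_combination this

set_option maxHeartbeats 1600000 in

/-- If `(Q0, Q1, Q2)` is a type I Hermite–Padé triple of order `n` for the Nikishin pair
`(f1, f2)`, then `c_k(Q1 + Q2 σ̂) = 0` for all `k = 0, …, 2n`; in particular, if `Q2 ≠ 0` then
`(−Q1, Q2)` is a linear Tschebyshev–Padé pair of order `n` for the Markov function `σ̂`. -/
theorem hermite_pade_gives_tschebyshev_pade
    (μ : Measure ℝ) [IsFiniteMeasure μ] (hμsupp : μ (Set.Icc (-1 : ℝ) 1)ᶜ = 0)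
    (hμinf : (measSupport μ).Infinite)
    (T : ℕ → Polynomial ℝ)
    (hTdeg : ∀ k, (T k).degree = k)
    (hTlead : ∀ k, 0 < (T k).leadingCoeff)
    (hTorth : ∀ j k, ∫ x, (T j).eval x * (T k).eval x ∂μ = if j = k then 1 else 0)
    (c d : ℝ) (hcd : c ≤ d) (hdisj : Set.Icc c d ∩ Set.Icc (-1 : ℝ) 1 = ∅)
    (σ : Measure ℝ) [IsFiniteMeasure σ] (hσsupp : σ (Set.Icc c d)ᶜ = 0)
    (f1 f2 : ℂ → ℂ)
    (hf1 : ∀ z : ℂ, f1 z = ∫ x : ℝ, (z - (x : ℂ))⁻¹ ∂μ)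
    (hf2 : ∀ z : ℂ, f2 z = ∫ x : ℝ, (∫ t : ℝ, ((x : ℂ) - (t : ℂ))⁻¹ ∂σ) * (z - (x : ℂ))⁻¹ ∂μ)
    (n : ℕ) (Q0 Q1 Q2 : Polynomial ℂ)
    (hQ0 : Q0.natDegree ≤ n - 1) (hQ1 : Q1.natDegree ≤ n) (hQ2 : Q2.natDegree ≤ n)
    (hnz : ¬(Q0 = 0 ∧ Q1 = 0 ∧ Q2 = 0))
    (hpade : ∃ C R : ℝ, ∀ z : ℂ, R < ‖z‖ →
      ‖z ^ (2 * n + 2) *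
        (Q0.eval z + Q1.eval z * f1 z + Q2.eval z * f2 z)‖ ≤ C) :
    (∀ k ≤ 2 * n, ∫ x : ℝ, (Q1.eval (x : ℂ) +
        Q2.eval (x : ℂ) * (∫ t : ℝ, ((x : ℂ) - (t : ℂ))⁻¹ ∂σ)) *
          (((T k).eval x : ℝ) : ℂ) ∂μ = 0) ∧
    (Q2 ≠ 0 → ∀ k ≤ 2 * n,
      ∫ x : ℝ, (Q2.eval (x : ℂ) * (∫ t : ℝ, ((x : ℂ) - (t : ℂ))⁻¹ ∂σ) -
        (-Q1).eval (x : ℂ)) * (((T k).eval x : ℝ) : ℂ) ∂μ = 0) := by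
  classical
  set sh : ℝ → ℂ := fun x => ∫ t : ℝ, ((x : ℂ) - (t : ℂ))⁻¹ ∂σ with hshdef
  set F : ℝ → ℂ := fun x => Q1.eval (x : ℂ) + Q2.eval (x : ℂ) * sh x with hFdef
  have haeΔ : ∀ᵐ x ∂μ, x ∈ Set.Icc (-1 : ℝ) 1 := hp_ae_mem hμsupp
  -- separation of the supports
  obtain ⟨δ0, hδ0, hsep⟩ : ∃ δ0 > 0, ∀ x ∈ Set.Icc (-1:ℝ) 1, ∀ t ∈ Set.Icc c d,
      δ0 ≤ |x - t| := by
    have hcase : 1 < c ∨ d < -1 := by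
      by_contra h
      push_neg at h
      obtain ⟨h1, h2⟩ := h
      have hmem : max c (-1) ∈ Set.Icc c d ∩ Set.Icc (-1:ℝ) 1 :=
        ⟨⟨le_max_left _ _, max_le hcd (by linarith)⟩,
         ⟨le_max_right _ _, max_le h1 (by norm_num)⟩⟩
      rw [hdisj] at hmem
      exact hmem
    rcases hcase with hc | hd
    · exact ⟨c - 1, by linarith, fun x hx t ht =>
        le_abs.mpr (Or.inr (by have := hx.2; have := ht.1; simp only [neg_sub]; linarith))⟩
    · exact ⟨-1 - d, by linarith, fun x hx t ht =>
        le_abs.mpr (Or.inl (by have := hx.1; have := ht.2; linarith))⟩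
  -- bound for sh on Δ
  have hsh_bdd : ∀ x ∈ Set.Icc (-1:ℝ) 1, ‖sh x‖ ≤ δ0⁻¹ * (σ Set.univ).toReal := by
    intro x hx
    refine hp_norm_integral_bdd hσsupp δ0⁻¹ fun t ht => ?_
    have hxt : ((x : ℂ) - (t : ℂ)) = ((x - t : ℝ) : ℂ) := by push_cast; ring
    rw [norm_inv, hxt, Complex.norm_real, Real.norm_eq_abs]
    exact inv_anti₀ hδ0 (hsep x hx t ht)
  set Mσ : ℝ := δ0⁻¹ * (σ Set.univ).toReal with hMσdef
  have hMσ0 : 0 ≤ Mσ := by positivity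
  set B1 : ℝ := ∑ i ∈ range (Q1.natDegree + 1), ‖Q1.coeff i‖ with hB1def
  set B2 : ℝ := ∑ i ∈ range (Q2.natDegree + 1), ‖Q2.coeff i‖ with hB2def
  have hB10 : 0 ≤ B1 := Finset.sum_nonneg fun _ _ => norm_nonneg _
  have hB20 : 0 ≤ B2 := Finset.sum_nonneg fun _ _ => norm_nonneg _
  set BF : ℝ := B1 + B2 * Mσ with hBFdef
  have hBF0 : 0 ≤ BF := by positivity
  have hxn : ∀ x ∈ Set.Icc (-1:ℝ) 1, ‖(x : ℂ)‖ ≤ 1 := by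
    intro x hx
    rw [Complex.norm_real, Real.norm_eq_abs, abs_le]
    exact ⟨hx.1, hx.2⟩
  have hF_bdd : ∀ x ∈ Set.Icc (-1:ℝ) 1, ‖F x‖ ≤ BF := by
    intro x hx
    refine (norm_add_le _ _).trans ?_
    rw [norm_mul]
    exact add_le_add (hp_poly_eval_bound Q1 hx)
      (mul_le_mul (hp_poly_eval_bound Q2 hx) (hsh_bdd x hx) (norm_nonneg _) hB20)
  -- measurability
  have hmx : Measurable fun x : ℝ => (x : ℂ) := Complex.measurable_ofReal
  have hmev : ∀ P : Polynomial ℂ, Measurable fun x : ℝ => P.eval (x : ℂ) := fun P =>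
    (P.continuous.comp Complex.continuous_ofReal).measurable
  have hmsh : Measurable sh := (hp_sh_meas σ).measurable
  have hmF : Measurable F := (hmev Q1).add ((hmev Q2).mul hmsh)
  have hmK : ∀ z : ℂ, Measurable fun x : ℝ => (z - (x : ℂ))⁻¹ := fun z =>
    (measurable_const.sub hmx).inv
  -- master integrability
  have hI : ∀ (g : ℝ → ℂ) (M : ℝ), Measurable g →
      (∀ x ∈ Set.Icc (-1:ℝ) 1, ‖g x‖ ≤ M) → Integrable g μ := fun g M hg hM =>
    hp_integrable_of_bdd hμsupp hg.aestronglyMeasurable M hM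
  have hIpow : ∀ k : ℕ, Integrable (fun x : ℝ => ((x:ℂ)) ^ k) μ := fun k =>
    hI _ 1 (hmx.pow_const k) fun x hx => by
      rw [norm_pow]; exact pow_le_one₀ (norm_nonneg _) (hxn x hx)
  have hIshpow : ∀ k : ℕ, Integrable (fun x : ℝ => sh x * ((x:ℂ)) ^ k) μ := fun k =>
    hI _ Mσ (hmsh.mul (hmx.pow_const k)) fun x hx => by
      rw [norm_mul, norm_pow]
      calc ‖sh x‖ * ‖(x:ℂ)‖ ^ k ≤ Mσ * 1 :=
            mul_le_mul (hsh_bdd x hx) (pow_le_one₀ (norm_nonneg _) (hxn x hx))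
              (by positivity) hMσ0
        _ = Mσ := mul_one _
  have hIFpow : ∀ k : ℕ, Integrable (fun x : ℝ => F x * ((x:ℂ)) ^ k) μ := fun k =>
    hI _ BF (hmF.mul (hmx.pow_const k)) fun x hx => by
      rw [norm_mul, norm_pow]
      calc ‖F x‖ * ‖(x:ℂ)‖ ^ k ≤ BF * 1 :=
            mul_le_mul (hF_bdd x hx) (pow_le_one₀ (norm_nonneg _) (hxn x hx))
              (by positivity) hBF0
        _ = BF := mul_one _
  have hKb : ∀ z : ℂ, 1 < ‖z‖ → ∀ x ∈ Set.Icc (-1:ℝ) 1,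
      ‖(z - (x:ℂ))⁻¹‖ ≤ (‖z‖ - 1)⁻¹ := by
    intro z hz x hx
    rw [norm_inv]
    have h1 : ‖z‖ - 1 ≤ ‖z - (x:ℂ)‖ := by
      have := norm_sub_norm_le z ((x:ℂ))
      have := hxn x hx
      linarith
    exact inv_anti₀ (by linarith) h1
  -- the polynomials A, q, p
  set A : Polynomial ℂ :=
    (∑ i ∈ range (Q1.natDegree + 1), ∑ j ∈ range i,
      Polynomial.C (Q1.coeff i * ∫ x : ℝ, ((x:ℂ)) ^ (i - 1 - j) ∂μ) * X ^ j)
    + (∑ i ∈ range (Q2.natDegree + 1), ∑ j ∈ range i,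
      Polynomial.C (Q2.coeff i * ∫ x : ℝ, sh x * ((x:ℂ)) ^ (i - 1 - j) ∂μ) * X ^ j)
    with hAdef
  set q : Polynomial ℂ :=
    ∑ j ∈ range (2 * n + 1), Polynomial.C (∫ x : ℝ, F x * ((x:ℂ)) ^ j ∂μ) * X ^ (2 * n + 1 - j)
    with hqdef
  set p : Polynomial ℂ := (Q0 + A) * X ^ (2 * n + 2) + q with hpdef
  obtain ⟨C, R, hCR⟩ := hpade
  have hpeval : ∀ z : ℂ, p.eval z = z ^ (2 * n + 2) * Q0.eval z
      + ((∑ i ∈ range (Q1.natDegree + 1), ∑ j ∈ range i,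
          (z ^ (2 * n + 2) * z ^ j) * (Q1.coeff i * ∫ x : ℝ, ((x:ℂ)) ^ (i - 1 - j) ∂μ))
        + (∑ i ∈ range (Q2.natDegree + 1), ∑ j ∈ range i,
          (z ^ (2 * n + 2) * z ^ j) * (Q2.coeff i * ∫ x : ℝ, sh x * ((x:ℂ)) ^ (i - 1 - j) ∂μ))
        + (∑ j ∈ range (2 * n + 1), z ^ (2 * n + 1 - j) * ∫ x : ℝ, F x * ((x:ℂ)) ^ j ∂μ)) := by
    intro z
    have e1 : (∑ i ∈ range (Q1.natDegree + 1), ∑ j ∈ range i,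
        (Q1.coeff i * ∫ x : ℝ, ((x:ℂ)) ^ (i - 1 - j) ∂μ) * z ^ j) * z ^ (2 * n + 2)
        = ∑ i ∈ range (Q1.natDegree + 1), ∑ j ∈ range i,
          (z ^ (2 * n + 2) * z ^ j) * (Q1.coeff i * ∫ x : ℝ, ((x:ℂ)) ^ (i - 1 - j) ∂μ) := by
      rw [Finset.sum_mul]
      refine Finset.sum_congr rfl fun i _ => ?_
      rw [Finset.sum_mul]
      exact Finset.sum_congr rfl fun j _ => by ring
    have e2 : (∑ i ∈ range (Q2.natDegree + 1), ∑ j ∈ range i,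
        (Q2.coeff i * ∫ x : ℝ, sh x * ((x:ℂ)) ^ (i - 1 - j) ∂μ) * z ^ j) * z ^ (2 * n + 2)
        = ∑ i ∈ range (Q2.natDegree + 1), ∑ j ∈ range i,
          (z ^ (2 * n + 2) * z ^ j) * (Q2.coeff i * ∫ x : ℝ, sh x * ((x:ℂ)) ^ (i - 1 - j) ∂μ) := by
      rw [Finset.sum_mul]
      refine Finset.sum_congr rfl fun i _ => ?_
      rw [Finset.sum_mul]
      exact Finset.sum_congr rfl fun j _ => by ring
    have e3 : (∑ j ∈ range (2 * n + 1),
        (∫ x : ℝ, F x * ((x:ℂ)) ^ j ∂μ) * z ^ (2 * n + 1 - j))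
        = ∑ j ∈ range (2 * n + 1), z ^ (2 * n + 1 - j) * ∫ x : ℝ, F x * ((x:ℂ)) ^ j ∂μ :=
      Finset.sum_congr rfl fun j _ => mul_comm _ _
    simp only [hpdef, hAdef, hqdef, eval_add, eval_mul, eval_pow, eval_X, eval_finset_sum,
      eval_C]
    rw [add_mul, add_mul, e1, e2, e3]
    ring
  -- the main identity
  have hmain : ∀ z : ℂ, 1 < ‖z‖ →
      z ^ (2 * n + 2) * (Q0.eval z + Q1.eval z * f1 z + Q2.eval z * f2 z)
        = p.eval z + z * ∫ x : ℝ, F x * ((x:ℂ)) ^ (2 * n + 1) * (z - (x:ℂ))⁻¹ ∂μ := by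
    intro z hz
    have hzx : ∀ x ∈ Set.Icc (-1:ℝ) 1, z ≠ (x : ℂ) := by
      intro x hx h
      rw [h] at hz
      exact absurd (hxn x hx) (not_le.mpr hz)
    -- integrable pieces
    have hIK : Integrable (fun x : ℝ => (z - (x:ℂ))⁻¹) μ :=
      hI _ ((‖z‖ - 1)⁻¹) (hmK z) (hKb z hz)
    have hIshK : Integrable (fun x : ℝ => sh x * (z - (x:ℂ))⁻¹) μ :=
      hI _ (Mσ * (‖z‖ - 1)⁻¹) (hmsh.mul (hmK z)) fun x hx => by
        rw [norm_mul]
        exact mul_le_mul (hsh_bdd x hx) (hKb z hz x hx) (norm_nonneg _) hMσ0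
    have hIFK : Integrable (fun x : ℝ => F x * ((x:ℂ)) ^ (2 * n + 1) * (z - (x:ℂ))⁻¹) μ :=
      hI _ (BF * (‖z‖ - 1)⁻¹) ((hmF.mul (hmx.pow_const _)).mul (hmK z)) fun x hx => by
        rw [norm_mul, norm_mul, norm_pow]
        have h1 : ‖F x‖ * ‖(x:ℂ)‖ ^ (2 * n + 1) ≤ BF := by
          calc ‖F x‖ * ‖(x:ℂ)‖ ^ (2 * n + 1) ≤ BF * 1 :=
              mul_le_mul (hF_bdd x hx) (pow_le_one₀ (norm_nonneg _) (hxn x hx))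
                (by positivity) hBF0
            _ = BF := mul_one _
        exact mul_le_mul h1 (hKb z hz x hx) (norm_nonneg _) hBF0
    have hIT1 : ∀ i j : ℕ, Integrable
        (fun x : ℝ => (z ^ (2 * n + 2) * z ^ j) * (Q1.coeff i * ((x:ℂ)) ^ (i - 1 - j))) μ :=
      fun i j => ((hIpow _).const_mul _).const_mul _
    have hIT2 : ∀ i j : ℕ, Integrable
        (fun x : ℝ => (z ^ (2 * n + 2) * z ^ j) * (Q2.coeff i * (sh x * ((x:ℂ)) ^ (i - 1 - j)))) μ :=
      fun i j => ((hIshpow _).const_mul _).const_mul _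
    have hIT3 : ∀ j : ℕ, Integrable
        (fun x : ℝ => z ^ (2 * n + 1 - j) * (F x * ((x:ℂ)) ^ j)) μ :=
      fun j => (hIFpow j).const_mul _
    have hIS1 : Integrable (fun x : ℝ => ∑ i ∈ range (Q1.natDegree + 1), ∑ j ∈ range i,
        (z ^ (2 * n + 2) * z ^ j) * (Q1.coeff i * ((x:ℂ)) ^ (i - 1 - j))) μ :=
      integrable_finset_sum _ fun i _ => integrable_finset_sum _ fun j _ => hIT1 i j
    have hIS2 : Integrable (fun x : ℝ => ∑ i ∈ range (Q2.natDegree + 1), ∑ j ∈ range i,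
        (z ^ (2 * n + 2) * z ^ j) * (Q2.coeff i * (sh x * ((x:ℂ)) ^ (i - 1 - j)))) μ :=
      integrable_finset_sum _ fun i _ => integrable_finset_sum _ fun j _ => hIT2 i j
    have hIS3 : Integrable (fun x : ℝ => ∑ j ∈ range (2 * n + 1),
        z ^ (2 * n + 1 - j) * (F x * ((x:ℂ)) ^ j)) μ :=
      integrable_finset_sum _ fun j _ => hIT3 j
    have hILast : Integrable
        (fun x : ℝ => z * (F x * ((x:ℂ)) ^ (2 * n + 1) * (z - (x:ℂ))⁻¹)) μ :=
      hIFK.const_mul z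
    -- pointwise identity
    have hptwise : ∀ x ∈ Set.Icc (-1:ℝ) 1,
        (z ^ (2 * n + 2) * Q1.eval z) * (z - (x:ℂ))⁻¹
          + (z ^ (2 * n + 2) * Q2.eval z) * (sh x * (z - (x:ℂ))⁻¹)
        = (∑ i ∈ range (Q1.natDegree + 1), ∑ j ∈ range i,
            (z ^ (2 * n + 2) * z ^ j) * (Q1.coeff i * ((x:ℂ)) ^ (i - 1 - j)))
          + (∑ i ∈ range (Q2.natDegree + 1), ∑ j ∈ range i,
            (z ^ (2 * n + 2) * z ^ j) * (Q2.coeff i * (sh x * ((x:ℂ)) ^ (i - 1 - j))))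
          + (∑ j ∈ range (2 * n + 1), z ^ (2 * n + 1 - j) * (F x * ((x:ℂ)) ^ j))
          + z * (F x * ((x:ℂ)) ^ (2 * n + 1) * (z - (x:ℂ))⁻¹) := by
      intro x hx
      have hzx' : z ≠ (x : ℂ) := hzx x hx
      have hFx : F x = Q1.eval (x:ℂ) + Q2.eval (x:ℂ) * sh x := by simp only [hFdef]
      have h1 := hp_poly_div_split Q1 z ((x:ℂ)) hzx'
      have h2 := hp_poly_div_split Q2 z ((x:ℂ)) hzx'
      have h3' : z ^ (2 * n + 1) * (z - (x:ℂ))⁻¹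
          = (∑ j ∈ range (2 * n + 1), ((x:ℂ)) ^ j * z ^ (2 * n - j))
            + ((x:ℂ)) ^ (2 * n + 1) * (z - (x:ℂ))⁻¹ := by
        rw [hp_pow_div_split z ((x:ℂ)) hzx' (2 * n + 1)]
        simp only [Nat.add_sub_cancel]
      have hSig : (∑ j ∈ range (2 * n + 1), ((x:ℂ)) ^ j * z ^ (2 * n - j))
          = z ^ (2 * n + 1) * (z - (x:ℂ))⁻¹ - ((x:ℂ)) ^ (2 * n + 1) * (z - (x:ℂ))⁻¹ :=
        eq_sub_of_add_eq h3'.symm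
      have hE1 : (∑ i ∈ range (Q1.natDegree + 1), ∑ j ∈ range i,
          (z ^ (2 * n + 2) * z ^ j) * (Q1.coeff i * ((x:ℂ)) ^ (i - 1 - j)))
          = z ^ (2 * n + 2) * (∑ i ∈ range (Q1.natDegree + 1), ∑ j ∈ range i,
            Q1.coeff i * ((x:ℂ)) ^ (i - 1 - j) * z ^ j) := by
        rw [Finset.mul_sum]
        refine Finset.sum_congr rfl fun i _ => ?_
        rw [Finset.mul_sum]
        exact Finset.sum_congr rfl fun j _ => by ring
      have hE2 : (∑ i ∈ range (Q2.natDegree + 1), ∑ j ∈ range i,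
          (z ^ (2 * n + 2) * z ^ j) * (Q2.coeff i * (sh x * ((x:ℂ)) ^ (i - 1 - j))))
          = (z ^ (2 * n + 2) * sh x) * (∑ i ∈ range (Q2.natDegree + 1), ∑ j ∈ range i,
            Q2.coeff i * ((x:ℂ)) ^ (i - 1 - j) * z ^ j) := by
        rw [Finset.mul_sum]
        refine Finset.sum_congr rfl fun i _ => ?_
        rw [Finset.mul_sum]
        exact Finset.sum_congr rfl fun j _ => by ring
      have hE3 : (∑ j ∈ range (2 * n + 1), z ^ (2 * n + 1 - j) * (F x * ((x:ℂ)) ^ j))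
          = (z * F x) * (∑ j ∈ range (2 * n + 1), ((x:ℂ)) ^ j * z ^ (2 * n - j)) := by
        rw [Finset.mul_sum]
        refine Finset.sum_congr rfl fun j hj => ?_
        have hj' : j < 2 * n + 1 := Finset.mem_range.mp hj
        have hpow : z ^ (2 * n + 1 - j) = z * z ^ (2 * n - j) := by
          rw [← pow_succ']
          congr 1
          omega
        rw [hpow]
        ring
      rw [hE1, hE2, hE3, hSig, hFx]
      have hL1 : Q1.eval z * (z - (x:ℂ))⁻¹
          = (∑ i ∈ range (Q1.natDegree + 1), ∑ j ∈ range i,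
              Q1.coeff i * ((x:ℂ)) ^ (i - 1 - j) * z ^ j) + Q1.eval ((x:ℂ)) * (z - (x:ℂ))⁻¹ := h1
      have hL2 : Q2.eval z * (z - (x:ℂ))⁻¹
          = (∑ i ∈ range (Q2.natDegree + 1), ∑ j ∈ range i,
              Q2.coeff i * ((x:ℂ)) ^ (i - 1 - j) * z ^ j) + Q2.eval ((x:ℂ)) * (z - (x:ℂ))⁻¹ := h2
      have key1 : (z ^ (2 * n + 2) * Q1.eval z) * (z - (x:ℂ))⁻¹
          = z ^ (2 * n + 2) * (Q1.eval z * (z - (x:ℂ))⁻¹) := by ring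
      have key2 : (z ^ (2 * n + 2) * Q2.eval z) * (sh x * (z - (x:ℂ))⁻¹)
          = (z ^ (2 * n + 2) * sh x) * (Q2.eval z * (z - (x:ℂ))⁻¹) := by ring
      rw [key1, key2, hL1, hL2]
      have hzpow : z ^ (2 * n + 2) = z * z ^ (2 * n + 1) := by
        rw [← pow_succ']
      rw [hzpow]
      ring
    -- putting the integrals together
    have e1 : z ^ (2 * n + 2) * (Q1.eval z * f1 z)
        = ∫ x : ℝ, (z ^ (2 * n + 2) * Q1.eval z) * (z - (x:ℂ))⁻¹ ∂μ := by
      rw [hf1 z, integral_const_mul]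
      ring
    have e2 : z ^ (2 * n + 2) * (Q2.eval z * f2 z)
        = ∫ x : ℝ, (z ^ (2 * n + 2) * Q2.eval z) * (sh x * (z - (x:ℂ))⁻¹) ∂μ := by
      have hf2' : f2 z = ∫ x : ℝ, sh x * (z - (x:ℂ))⁻¹ ∂μ := hf2 z
      rw [hf2', integral_const_mul]
      ring
    have hcong : ∫ x : ℝ, ((z ^ (2 * n + 2) * Q1.eval z) * (z - (x:ℂ))⁻¹
          + (z ^ (2 * n + 2) * Q2.eval z) * (sh x * (z - (x:ℂ))⁻¹)) ∂μ
        = ∫ x : ℝ, ((∑ i ∈ range (Q1.natDegree + 1), ∑ j ∈ range i,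
            (z ^ (2 * n + 2) * z ^ j) * (Q1.coeff i * ((x:ℂ)) ^ (i - 1 - j)))
          + (∑ i ∈ range (Q2.natDegree + 1), ∑ j ∈ range i,
            (z ^ (2 * n + 2) * z ^ j) * (Q2.coeff i * (sh x * ((x:ℂ)) ^ (i - 1 - j))))
          + (∑ j ∈ range (2 * n + 1), z ^ (2 * n + 1 - j) * (F x * ((x:ℂ)) ^ j))
          + z * (F x * ((x:ℂ)) ^ (2 * n + 1) * (z - (x:ℂ))⁻¹)) ∂μ := by
      refine integral_congr_ae ?_
      filter_upwards [haeΔ] with x hx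
      exact hptwise x hx
    have hS1 : ∫ x : ℝ, (∑ i ∈ range (Q1.natDegree + 1), ∑ j ∈ range i,
        (z ^ (2 * n + 2) * z ^ j) * (Q1.coeff i * ((x:ℂ)) ^ (i - 1 - j))) ∂μ
        = ∑ i ∈ range (Q1.natDegree + 1), ∑ j ∈ range i,
          (z ^ (2 * n + 2) * z ^ j) * (Q1.coeff i * ∫ x : ℝ, ((x:ℂ)) ^ (i - 1 - j) ∂μ) := by
      rw [integral_finset_sum _ fun i _ => integrable_finset_sum _ fun j _ => hIT1 i j]
      refine Finset.sum_congr rfl fun i _ => ?_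
      rw [integral_finset_sum _ fun j _ => hIT1 i j]
      refine Finset.sum_congr rfl fun j _ => ?_
      rw [integral_const_mul, integral_const_mul]
    have hS2 : ∫ x : ℝ, (∑ i ∈ range (Q2.natDegree + 1), ∑ j ∈ range i,
        (z ^ (2 * n + 2) * z ^ j) * (Q2.coeff i * (sh x * ((x:ℂ)) ^ (i - 1 - j)))) ∂μ
        = ∑ i ∈ range (Q2.natDegree + 1), ∑ j ∈ range i,
          (z ^ (2 * n + 2) * z ^ j) * (Q2.coeff i * ∫ x : ℝ, sh x * ((x:ℂ)) ^ (i - 1 - j) ∂μ) := by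
      rw [integral_finset_sum _ fun i _ => integrable_finset_sum _ fun j _ => hIT2 i j]
      refine Finset.sum_congr rfl fun i _ => ?_
      rw [integral_finset_sum _ fun j _ => hIT2 i j]
      refine Finset.sum_congr rfl fun j _ => ?_
      rw [integral_const_mul, integral_const_mul]
    have hS3 : ∫ x : ℝ, (∑ j ∈ range (2 * n + 1),
        z ^ (2 * n + 1 - j) * (F x * ((x:ℂ)) ^ j)) ∂μ
        = ∑ j ∈ range (2 * n + 1), z ^ (2 * n + 1 - j) * ∫ x : ℝ, F x * ((x:ℂ)) ^ j ∂μ := by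
      rw [integral_finset_sum _ fun j _ => hIT3 j]
      exact Finset.sum_congr rfl fun j _ => integral_const_mul _ _
    have hIS12 : Integrable (fun x : ℝ => (∑ i ∈ range (Q1.natDegree + 1), ∑ j ∈ range i,
        (z ^ (2 * n + 2) * z ^ j) * (Q1.coeff i * ((x:ℂ)) ^ (i - 1 - j)))
        + (∑ i ∈ range (Q2.natDegree + 1), ∑ j ∈ range i,
        (z ^ (2 * n + 2) * z ^ j) * (Q2.coeff i * (sh x * ((x:ℂ)) ^ (i - 1 - j))))) μ :=
      hIS1.add hIS2
    have hIS123 : Integrable (fun x : ℝ => (∑ i ∈ range (Q1.natDegree + 1), ∑ j ∈ range i,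
        (z ^ (2 * n + 2) * z ^ j) * (Q1.coeff i * ((x:ℂ)) ^ (i - 1 - j)))
        + (∑ i ∈ range (Q2.natDegree + 1), ∑ j ∈ range i,
        (z ^ (2 * n + 2) * z ^ j) * (Q2.coeff i * (sh x * ((x:ℂ)) ^ (i - 1 - j))))
        + (∑ j ∈ range (2 * n + 1), z ^ (2 * n + 1 - j) * (F x * ((x:ℂ)) ^ j))) μ :=
      hIS12.add hIS3
    calc z ^ (2 * n + 2) * (Q0.eval z + Q1.eval z * f1 z + Q2.eval z * f2 z)
        = z ^ (2 * n + 2) * Q0.eval z + (z ^ (2 * n + 2) * (Q1.eval z * f1 z)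
            + z ^ (2 * n + 2) * (Q2.eval z * f2 z)) := by ring
      _ = z ^ (2 * n + 2) * Q0.eval z
          + ∫ x : ℝ, ((z ^ (2 * n + 2) * Q1.eval z) * (z - (x:ℂ))⁻¹
            + (z ^ (2 * n + 2) * Q2.eval z) * (sh x * (z - (x:ℂ))⁻¹)) ∂μ := by
        rw [e1, e2, ← integral_add (hIK.const_mul _) (hIshK.const_mul _)]
      _ = z ^ (2 * n + 2) * Q0.eval z
          + ∫ x : ℝ, ((∑ i ∈ range (Q1.natDegree + 1), ∑ j ∈ range i,
              (z ^ (2 * n + 2) * z ^ j) * (Q1.coeff i * ((x:ℂ)) ^ (i - 1 - j)))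
            + (∑ i ∈ range (Q2.natDegree + 1), ∑ j ∈ range i,
              (z ^ (2 * n + 2) * z ^ j) * (Q2.coeff i * (sh x * ((x:ℂ)) ^ (i - 1 - j))))
            + (∑ j ∈ range (2 * n + 1), z ^ (2 * n + 1 - j) * (F x * ((x:ℂ)) ^ j))
            + z * (F x * ((x:ℂ)) ^ (2 * n + 1) * (z - (x:ℂ))⁻¹)) ∂μ := by rw [hcong]
      _ = z ^ (2 * n + 2) * Q0.eval z
          + (((∑ i ∈ range (Q1.natDegree + 1), ∑ j ∈ range i,
              (z ^ (2 * n + 2) * z ^ j) * (Q1.coeff i * ∫ x : ℝ, ((x:ℂ)) ^ (i - 1 - j) ∂μ))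
            + (∑ i ∈ range (Q2.natDegree + 1), ∑ j ∈ range i,
              (z ^ (2 * n + 2) * z ^ j) * (Q2.coeff i * ∫ x : ℝ, sh x * ((x:ℂ)) ^ (i - 1 - j) ∂μ))
            + (∑ j ∈ range (2 * n + 1), z ^ (2 * n + 1 - j) * ∫ x : ℝ, F x * ((x:ℂ)) ^ j ∂μ))
            + z * ∫ x : ℝ, F x * ((x:ℂ)) ^ (2 * n + 1) * (z - (x:ℂ))⁻¹ ∂μ) := by
        rw [integral_add hIS123 hILast,
          integral_add hIS12 hIS3, integral_add hIS1 hIS2, hS1, hS2, hS3,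
          integral_const_mul]
      _ = p.eval z + z * ∫ x : ℝ, F x * ((x:ℂ)) ^ (2 * n + 1) * (z - (x:ℂ))⁻¹ ∂μ := by
        rw [hpeval z]
        ring
  -- boundedness of p near infinity
  have hpbd : ∀ z : ℂ, max R 2 < ‖z‖ →
      ‖p.eval z‖ ≤ C + 2 * (BF * (μ Set.univ).toReal) := by
    intro z hz
    have hzR : R < ‖z‖ := lt_of_le_of_lt (le_max_left _ _) hz
    have hz2 : 2 < ‖z‖ := lt_of_le_of_lt (le_max_right _ _) hz
    have hz1 : 1 < ‖z‖ := by linarith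
    have hid := hmain z hz1
    have hpz : p.eval z = z ^ (2 * n + 2) * (Q0.eval z + Q1.eval z * f1 z + Q2.eval z * f2 z)
        - z * ∫ x : ℝ, F x * ((x:ℂ)) ^ (2 * n + 1) * (z - (x:ℂ))⁻¹ ∂μ := by
      rw [hid]; ring
    have hρ : ‖∫ x : ℝ, F x * ((x:ℂ)) ^ (2 * n + 1) * (z - (x:ℂ))⁻¹ ∂μ‖
        ≤ (BF * (‖z‖ - 1)⁻¹) * (μ Set.univ).toReal := by
      refine hp_norm_integral_bdd hμsupp _ fun x hx => ?_
      rw [norm_mul, norm_mul, norm_pow]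
      have h1 : ‖F x‖ * ‖(x:ℂ)‖ ^ (2 * n + 1) ≤ BF := by
        calc ‖F x‖ * ‖(x:ℂ)‖ ^ (2 * n + 1) ≤ BF * 1 :=
            mul_le_mul (hF_bdd x hx) (pow_le_one₀ (norm_nonneg _) (hxn x hx))
              (by positivity) hBF0
          _ = BF := mul_one _
      exact mul_le_mul h1 (hKb z hz1 x hx) (norm_nonneg _) hBF0
    have hfrac : ‖z‖ * (‖z‖ - 1)⁻¹ ≤ 2 := by
      have hpos : (0:ℝ) < ‖z‖ - 1 := by linarith
      rw [mul_inv_le_iff₀ hpos]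
      linarith
    have hu : (0:ℝ) ≤ (μ Set.univ).toReal := ENNReal.toReal_nonneg
    have hbig : ‖z * ∫ x : ℝ, F x * ((x:ℂ)) ^ (2 * n + 1) * (z - (x:ℂ))⁻¹ ∂μ‖
        ≤ 2 * (BF * (μ Set.univ).toReal) := by
      rw [norm_mul]
      calc ‖z‖ * ‖∫ x : ℝ, F x * ((x:ℂ)) ^ (2 * n + 1) * (z - (x:ℂ))⁻¹ ∂μ‖
          ≤ ‖z‖ * ((BF * (‖z‖ - 1)⁻¹) * (μ Set.univ).toReal) :=
            mul_le_mul_of_nonneg_left hρ (norm_nonneg _)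
        _ = (BF * (μ Set.univ).toReal) * (‖z‖ * (‖z‖ - 1)⁻¹) := by ring
        _ ≤ (BF * (μ Set.univ).toReal) * 2 :=
            mul_le_mul_of_nonneg_left hfrac (mul_nonneg hBF0 hu)
        _ = 2 * (BF * (μ Set.univ).toReal) := by ring
    calc ‖p.eval z‖
        ≤ ‖z ^ (2 * n + 2) * (Q0.eval z + Q1.eval z * f1 z + Q2.eval z * f2 z)‖
          + ‖z * ∫ x : ℝ, F x * ((x:ℂ)) ^ (2 * n + 1) * (z - (x:ℂ))⁻¹ ∂μ‖ := by
          rw [hpz]; exact norm_sub_le _ _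
      _ ≤ C + 2 * (BF * (μ Set.univ).toReal) := add_le_add (hCR z hzR) hbig
  -- therefore p = 0
  have hdeg0 : p.degree ≤ 0 := hp_poly_bdd_degree_le_zero p _ _ hpbd
  have hqc0 : q.coeff 0 = 0 := by
    rw [hqdef, Polynomial.finset_sum_coeff]
    refine Finset.sum_eq_zero fun j hj => ?_
    have hj' : j < 2 * n + 1 := Finset.mem_range.mp hj
    rw [Polynomial.coeff_C_mul, Polynomial.coeff_X_pow, if_neg (by omega), mul_zero]
  have hpc : ∀ k : ℕ, k < 2 * n + 2 → p.coeff k = q.coeff k := by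
    intro k hk
    rw [hpdef, Polynomial.coeff_add, Polynomial.coeff_mul_X_pow', if_neg (by omega), zero_add]
  have hc0 : p.coeff 0 = 0 := by rw [hpc 0 (by omega), hqc0]
  have hp0 : p = 0 := by
    have := Polynomial.eq_C_of_degree_le_zero hdeg0
    rw [hc0] at this
    simpa using this
  -- moments vanish
  have hmzero : ∀ j ≤ 2 * n, (∫ x : ℝ, F x * ((x:ℂ)) ^ j ∂μ) = 0 := by
    intro j hj
    have hqc : q.coeff (2 * n + 1 - j) = ∫ x : ℝ, F x * ((x:ℂ)) ^ j ∂μ := by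
      rw [hqdef, Polynomial.finset_sum_coeff]
      rw [Finset.sum_eq_single j]
      · rw [Polynomial.coeff_C_mul, Polynomial.coeff_X_pow, if_pos rfl, mul_one]
      · intro j' hj' hne
        have hj'' : j' < 2 * n + 1 := Finset.mem_range.mp hj'
        rw [Polynomial.coeff_C_mul, Polynomial.coeff_X_pow, if_neg (by omega), mul_zero]
      · intro h
        exact absurd (Finset.mem_range.mpr (by omega)) h
    calc (∫ x : ℝ, F x * ((x:ℂ)) ^ j ∂μ) = q.coeff (2 * n + 1 - j) := hqc.symm
      _ = p.coeff (2 * n + 1 - j) := (hpc _ (by omega)).symm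
      _ = 0 := by rw [hp0, Polynomial.coeff_zero]
  -- orthogonality against T k
  have hfin : ∀ k ≤ 2 * n, ∫ x : ℝ, F x * (((T k).eval x : ℝ) : ℂ) ∂μ = 0 := by
    intro k hk
    have hnd : (T k).natDegree = k := Polynomial.natDegree_eq_of_degree_eq_some (hTdeg k)
    have hrw : (fun x : ℝ => F x * (((T k).eval x : ℝ) : ℂ))
        = fun x : ℝ => ∑ i ∈ range (k + 1), ((T k).coeff i : ℂ) * (F x * ((x:ℂ)) ^ i) := by
      funext x
      rw [Polynomial.eval_eq_sum_range (p := T k) x, hnd]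
      push_cast
      rw [Finset.mul_sum]
      exact Finset.sum_congr rfl fun i _ => by ring
    rw [hrw, integral_finset_sum _ fun i _ => (hIFpow i).const_mul _]
    refine Finset.sum_eq_zero fun i hi => ?_
    have hi' : i < k + 1 := Finset.mem_range.mp hi
    rw [integral_const_mul, hmzero i (by omega), mul_zero]
  have hfin' : ∀ k ≤ 2 * n, ∫ x : ℝ, (Q1.eval (x : ℂ) +
      Q2.eval (x : ℂ) * (∫ t : ℝ, ((x : ℂ) - (t : ℂ))⁻¹ ∂σ)) *
        (((T k).eval x : ℝ) : ℂ) ∂μ = 0 := by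
    have h := hfin
    simp only [hFdef, hshdef] at h
    exact h
  refine ⟨hfin', fun _ k hk => ?_⟩
  refine Eq.trans (integral_congr_ae (Filter.EventuallyEq.of_eq (funext fun x => ?_)))
    (hfin' k hk)
  rw [Polynomial.eval_neg]
  ring
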